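/- Let G be a group and H ≤ G a subgroup of finite index n = [G : H]. If K₀ ⊊ K₁ ⊊ ⋯ ⊊ K_m is a strictly increasing chain of subgroups of G such that K_i ∩ H = K₀ ∩ H for every i, then m ≤ n − 1; equivalently, any such chain has at most n terms. -/

import Mathlib

lemma stmt17_aux {m : ℕ} (g : Fin (m + 1) → ℕ) (hg : StrictMono g) (i : Fin (m + 1)) :
    (i : ℕ) + g 0 ≤ g i := by
  induction i using Fin.induction with
  | zero => simp
  | succ i ih =>
      have h1 : g i.castSucc < g i.succ := hg (by simp [Fin.lt_def])
      have h2 : ((i.succ : Fin (m+1)) : ℕ) = (i.castSucc : ℕ) + 1 := by simp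
      omega

/-- Let `H` be a subgroup of finite index `n` in a group `G`. If `K₀ ⊊ K₁ ⊊ ⋯ ⊊ K_m` is
a strictly increasing chain of subgroups of `G` with `K_i ∩ H = K₀ ∩ H` for all `i`,
then `m ≤ n - 1`. -/
theorem stmt17 {G : Type*} [Group G] (H : Subgroup G) [H.FiniteIndex]
    (m : ℕ) (K : Fin (m + 1) → Subgroup G)
    (hmono : StrictMono K)
    (hint : ∀ i, K i ⊓ H = K 0 ⊓ H) :
    m ≤ H.index - 1 := by
  classical
  have hfin : Finite (G ⧸ H) :=
    Nat.finite_of_card_ne_zero Subgroup.FiniteIndex.index_ne_zero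
  set S : Fin (m + 1) → Set (G ⧸ H) :=
    fun i => (QuotientGroup.mk : G → G ⧸ H) '' (K i : Set G) with hS
  have hSmono : StrictMono S := by
    intro i j hij
    constructor
    · exact Set.image_mono (hmono.monotone hij.le)
    · intro hsub
      obtain ⟨k, hkj, hki⟩ := SetLike.exists_of_lt (hmono hij)
      have : (k : G ⧸ H) ∈ S i := hsub ⟨k, hkj, rfl⟩
      obtain ⟨k', hk'i, hk'⟩ := this
      have hH : k'⁻¹ * k ∈ H := (QuotientGroup.eq).mp hk'
      have hKj : k'⁻¹ * k ∈ K j :=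
        mul_mem (inv_mem (hmono.monotone hij.le hk'i)) hkj
      have h0 : k'⁻¹ * k ∈ K 0 ⊓ H := by
        rw [← hint j]; exact ⟨hKj, hH⟩
      have hki' : k ∈ K i := by
        have hk0 : k'⁻¹ * k ∈ K i := hmono.monotone (Fin.zero_le i) h0.1
        have := mul_mem hk'i hk0
        simpa using this
      exact hki hki'
  have hg : StrictMono fun i => (S i).ncard := by
    intro i j hij
    exact Set.ncard_lt_ncard (hSmono hij) (Set.toFinite _)
  have h1 : 1 ≤ (S 0).ncard := by
    have : ((1 : G) : G ⧸ H) ∈ S 0 := ⟨1, one_mem _, rfl⟩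
    have hne : (S 0).Nonempty := ⟨_, this⟩
    exact (Set.ncard_pos (Set.toFinite _)).mpr hne
  have h2 : (S (Fin.last m)).ncard ≤ H.index := by
    have : (S (Fin.last m)).ncard ≤ (Set.univ : Set (G ⧸ H)).ncard :=
      Set.ncard_le_ncard (Set.subset_univ _) Set.finite_univ
    rwa [Set.ncard_univ] at this
  have h3 := stmt17_aux _ hg (Fin.last m)
  simp only [Fin.val_last] at h3
  omega
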